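/- There exists no 31-ary nearly perfect sequence of period 32 and type γ = 1; that is, there is no function a : ℤ/32ℤ → ℂ taking all its values in the set of complex 31st roots of unity such that for every t ∈ ℤ/32ℤ with t ≠ 0 the autocorrelation C_a(t) = Σ_{i ∈ ℤ/32ℤ} a(i)·conj(a(i+t)) equals 1. -/

import Mathlib

open AddMonoidAlgebra Finsupp

/-! Auxiliary: char-3 group-algebra argument.
If `r : ZMod 31 → ZMod 3` has all (cyclic) autocorrelations zero, then `r = 0`.
This uses that `x ↦ x³` is a ring endomorphism (Frobenius) of
`A3 = (ZMod 3)[ZMod 31]` and that `3^15 ≡ -1 (mod 31)`. -/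

abbrev A3 : Type := AddMonoidAlgebra (ZMod 3) (ZMod 31)

instance : CharP A3 3 :=
  charP_of_injective_ringHom (f := AddMonoidAlgebra.singleZeroRingHom (R := ZMod 3) (M := ZMod 31))
    (AddMonoidAlgebra.single_right_injective (m := (0 : ZMod 31))) 3

noncomputable def EE (f : ZMod 31 → ZMod 3) : A3 :=
  ∑ v : ZMod 31, AddMonoidAlgebra.single v (f v)

lemma EE_apply (f : ZMod 31 → ZMod 3) (s : ZMod 31) : (EE f).coeff s = f s := by
  rw [EE, AddMonoidAlgebra.coeff_sum, Finsupp.finset_sum_apply]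
  simp [Finsupp.single_apply]

lemma EE_mul (f g : ZMod 31 → ZMod 3) :
    EE f * EE g = EE (fun s => ∑ w : ZMod 31, f (s - w) * g w) := by
  rw [EE, EE, Finset.sum_mul_sum]
  have h1 : ∀ v w : ZMod 31, AddMonoidAlgebra.single v (f v) * AddMonoidAlgebra.single w (g w)
      = AddMonoidAlgebra.single (v + w) (f v * g w) := fun v w =>
    AddMonoidAlgebra.single_mul_single _ _ _ _
  simp_rw [h1]
  rw [Finset.sum_comm]
  have h2 : ∀ w : ZMod 31, ∑ v : ZMod 31, AddMonoidAlgebra.single (v + w) (f v * g w)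
      = ∑ s : ZMod 31, AddMonoidAlgebra.single s (f (s - w) * g w) := by
    intro w
    refine Fintype.sum_equiv (Equiv.addRight w) _ _ (fun v => ?_)
    simp
  simp_rw [h2]
  rw [Finset.sum_comm, EE]
  refine Finset.sum_congr rfl (fun s _ => ?_)
  exact (map_sum (AddMonoidAlgebra.singleAddHom s) (fun w => f (s - w) * g w) Finset.univ).symm

def mul3Equiv : ZMod 31 ≃ ZMod 31 where
  toFun v := 3 * v
  invFun u := 21 * u
  left_inv v := by
    show 21 * (3 * v) = v
    rw [← mul_assoc]
    have h : (21 * 3 : ZMod 31) = 1 := by decide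
    rw [h, one_mul]
  right_inv u := by
    show 3 * (21 * u) = u
    rw [← mul_assoc]
    have h : (3 * 21 : ZMod 31) = 1 := by decide
    rw [h, one_mul]

lemma EE_cube (f : ZMod 31 → ZMod 3) : (EE f) ^ 3 = EE (fun u => f (21 * u)) := by
  haveI : Fact (Nat.Prime 3) := ⟨by norm_num⟩
  rw [EE, sum_pow_char]
  have h1 : ∀ v : ZMod 31, (AddMonoidAlgebra.single (R := ZMod 3) v (f v)) ^ 3
      = AddMonoidAlgebra.single (3 * v) (f v) := by
    intro v
    rw [AddMonoidAlgebra.single_pow, ZMod.pow_card]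
    congr 1
    push_cast [nsmul_eq_mul]
    rfl
  simp_rw [h1, EE]
  refine Fintype.sum_equiv mul3Equiv _ _ (fun v => ?_)
  show AddMonoidAlgebra.single (3 * v) (f v) = AddMonoidAlgebra.single (3 * v) (f (21 * (3 * v)))
  rw [← mul_assoc]
  have h : (21 * 3 : ZMod 31) = 1 := by decide
  rw [h, one_mul]

lemma EE_pow3 (f : ZMod 31 → ZMod 3) (k : ℕ) :
    (EE f) ^ (3 ^ k) = EE (fun u => f (21 ^ k * u)) := by
  induction k generalizing f with
  | zero => simp [EE]
  | succ n ih =>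
    rw [pow_succ, pow_mul, ih, EE_cube]
    congr 1
    funext u
    rw [pow_succ, mul_assoc]

lemma corr_zero_imp_zero (r : ZMod 31 → ZMod 3)
    (h : ∀ s : ZMod 31, ∑ w : ZMod 31, r (w + s) * r w = 0) : ∀ v, r v = 0 := by
  have hmul : EE r * EE (fun u => r (-u)) = 0 := by
    rw [EE_mul]
    have : (fun s => ∑ w : ZMod 31, r (s - w) * r (-w)) = fun _ => (0 : ZMod 3) := by
      funext s
      rw [← h s]
      refine (Fintype.sum_equiv (Equiv.neg _) (fun w => r (w + s) * r w)
        (fun w => r (s - w) * r (-w)) (fun w => ?_)).symm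
      show r (w + s) * r w = r (s - -w) * r (- -w)
      rw [sub_neg_eq_add, neg_neg, add_comm s w]
    rw [this]
    show EE (fun _ => 0) = 0
    simp [EE]
  have htilde : EE (fun u => r (-u)) = (EE r) ^ (3 ^ 15) := by
    rw [EE_pow3]
    congr 1
    funext u
    have : (21 : ZMod 31) ^ 15 = -1 := by decide
    rw [this, neg_one_mul]
  have hpow : (EE r) ^ (3 ^ 15 + 1) = 0 := by
    rw [pow_succ, ← htilde, mul_comm, hmul]
  have hbig : (EE r) ^ (3 ^ 16) = 0 := by
    have : (3:ℕ) ^ 16 = (3 ^ 15 + 1) + (3 ^ 16 - 3 ^ 15 - 1) := by norm_num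
    rw [this, pow_add, hpow, zero_mul]
  rw [EE_pow3] at hbig
  intro v
  have h0 : ∀ s : ZMod 31, r (21 ^ 16 * s) = 0 := by
    intro s
    have := congrArg (fun x : A3 => x.coeff s) hbig
    simpa [EE_apply] using this
  have key : (21 : ZMod 31) ^ 16 * 3 ^ 16 = 1 := by decide
  have := h0 (3 ^ 16 * v)
  rwa [← mul_assoc, key, one_mul] at this

/-- Summing over `ZMod 31` equals summing over `range 31`. -/
lemma zmod31_sum {M : Type*} [AddCommMonoid M] (f : ZMod 31 → M) :
    ∑ s : ZMod 31, f s = ∑ k ∈ Finset.range 31, f (k : ZMod 31) := by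
  haveI : NeZero (31 : ℕ) := ⟨by norm_num⟩
  refine Finset.sum_bij' (fun (s : ZMod 31) _ => s.val) (fun k _ => (k : ZMod 31))
    (fun s _ => Finset.mem_range.2 s.val_lt) (fun k _ => Finset.mem_univ _)
    (fun s _ => ZMod.natCast_rightInverse s) ?_ ?_
  · intro k hk
    exact ZMod.val_cast_of_lt (Finset.mem_range.1 hk)
  · intro s _
    rw [ZMod.natCast_rightInverse s]

/-- There is no 31-ary nearly perfect sequence of period 32 and type `γ = 1`:
no `a : ℤ/32ℤ → ℂ` with all values 31st roots of unity whose autocorrelation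
`C_a(t) = ∑ i, a i * conj (a (i + t))` equals `1` for every `t ≠ 0`. -/
theorem stmt_19 :
    ¬∃ a : ZMod 32 → ℂ, (∀ i, a i ^ 31 = 1) ∧
      ∀ t : ZMod 32, t ≠ 0 → ∑ i : ZMod 32, a i * (starRingEnd ℂ) (a (i + t)) = 1 := by
  haveI : NeZero (31 : ℕ) := ⟨by norm_num⟩
  rintro ⟨a, h1, h2⟩
  set ζ : ℂ := Complex.exp (2 * Real.pi * Complex.I / 31) with hζdef
  have hζ : IsPrimitiveRoot ζ 31 := Complex.isPrimitiveRoot_exp 31 (by norm_num)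
  have hζ31 : ζ ^ (31 : ℕ) = 1 := hζ.pow_eq_one
  set z : ZMod 31 → ℂ := fun v => ζ ^ v.val with hzdef
  have hmod : ∀ n : ℕ, ζ ^ (n % 31) = ζ ^ n := by
    intro n
    conv_rhs => rw [← Nat.div_add_mod n 31]
    rw [pow_add, pow_mul, hζ31, one_pow, one_mul]
  have zmul : ∀ v w : ZMod 31, z (v + w) = z v * z w := by
    intro v w
    show ζ ^ (v + w).val = ζ ^ v.val * ζ ^ w.val
    rw [ZMod.val_add, hmod, pow_add]
  have z0 : z 0 = 1 := by
    show ζ ^ (0 : ZMod 31).val = 1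
    rw [ZMod.val_zero, pow_zero]
  have zne : ∀ v, z v ≠ 0 := fun v => pow_ne_zero _ (Complex.exp_ne_zero _)
  have znorm : ∀ v, ‖z v‖ = 1 := by
    intro v
    refine Complex.norm_eq_one_of_pow_eq_one (n := 31) ?_ (by norm_num)
    show (ζ ^ v.val) ^ (31:ℕ) = 1
    rw [← pow_mul, mul_comm, pow_mul, hζ31, one_pow]
  have zconj : ∀ v, (starRingEnd ℂ) (z v) = z (-v) := by
    intro v
    have h1' : z v * (starRingEnd ℂ) (z v) = 1 := by
      rw [Complex.mul_conj, Complex.normSq_eq_norm_sq]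
      rw [znorm]
      norm_num
    have h2' : z v * z (-v) = 1 := by
      rw [← zmul, add_neg_cancel, z0]
    have := h1'.trans h2'.symm
    exact mul_left_cancel₀ (zne v) this
  -- the exponent function b
  have hbex : ∀ i : ZMod 32, ∃ v : ZMod 31, a i = z v := by
    intro i
    obtain ⟨k, hk, hk2⟩ := hζ.eq_pow_of_pow_eq_one (h1 i)
    refine ⟨(k : ZMod 31), ?_⟩
    rw [← hk2]
    show ζ ^ k = ζ ^ ((k : ZMod 31)).val
    rw [ZMod.val_cast_of_lt hk]
  choose b hb using hbex
  -- the multiplicity function m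
  set m : ZMod 31 → ℤ := fun v => ∑ i : ZMod 32, (if b i = v then 1 else 0) with hmdef
  have hm0 : ∀ v, 0 ≤ m v := by
    intro v
    refine Finset.sum_nonneg fun i _ => ?_
    split <;> norm_num
  have hmsum : ∑ v : ZMod 31, m v = 32 := by
    rw [hmdef, Finset.sum_comm]
    have : ∀ i : ZMod 32, (∑ v : ZMod 31, if b i = v then (1:ℤ) else 0) = 1 := by
      intro i
      simp
    simp_rw [this]
    simp
  -- S and the key identity S * conj S = 63
  set S : ℂ := ∑ i : ZMod 32, a i with hSdef
  have hshift : ∀ i : ZMod 32, ∑ t : ZMod 32, a (i + t) = S := by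
    intro i
    exact Fintype.sum_equiv (Equiv.addLeft i) _ _ (fun t => rfl)
  have habs1 : ∀ i, a i * (starRingEnd ℂ) (a i) = 1 := by
    intro i
    rw [hb i, zconj, ← zmul, add_neg_cancel, z0]
  have hSS : S * (starRingEnd ℂ) S = 63 := by
    have htot : ∑ t : ZMod 32, ∑ i : ZMod 32, a i * (starRingEnd ℂ) (a (i + t))
        = S * (starRingEnd ℂ) S := by
      rw [Finset.sum_comm]
      have : ∀ i : ZMod 32, ∑ t : ZMod 32, a i * (starRingEnd ℂ) (a (i + t))
          = a i * (starRingEnd ℂ) S := by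
        intro i
        rw [← Finset.mul_sum, ← map_sum, hshift]
      simp_rw [this]
      rw [← Finset.sum_mul]
    have hsplit : ∑ t : ZMod 32, ∑ i : ZMod 32, a i * (starRingEnd ℂ) (a (i + t)) = 63 := by
      rw [← Finset.add_sum_erase _ _ (Finset.mem_univ (0 : ZMod 32))]
      have hzero : ∑ i : ZMod 32, a i * (starRingEnd ℂ) (a (i + 0)) = 32 := by
        simp_rw [add_zero, habs1]
        simp
      have hone : ∀ t ∈ Finset.univ.erase (0 : ZMod 32),
          ∑ i : ZMod 32, a i * (starRingEnd ℂ) (a (i + t)) = 1 := by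
        intro t ht
        exact h2 t (Finset.mem_erase.1 ht).1
      rw [hzero, Finset.sum_congr rfl hone]
      rw [Finset.sum_const, Finset.card_erase_of_mem (Finset.mem_univ _)]
      simp [ZMod.card]
      norm_num
    rw [← htot, hsplit]
  -- S as a combination of the z v
  have hcast : ∀ v, (m v : ℂ) = ∑ i : ZMod 32, (if b i = v then (1:ℂ) else 0) := by
    intro v
    rw [hmdef]
    push_cast [apply_ite (fun x : ℤ => (x : ℂ))]
    rfl
  have hS : S = ∑ v : ZMod 31, (m v : ℂ) * z v := by
    have : ∑ v : ZMod 31, (m v : ℂ) * z v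
        = ∑ v : ZMod 31, ∑ i : ZMod 32, (if b i = v then (1:ℂ) else 0) * z v := by
      refine Finset.sum_congr rfl fun v _ => ?_
      rw [hcast, Finset.sum_mul]
    rw [this, Finset.sum_comm]
    refine (Finset.sum_congr rfl fun i _ => ?_).symm
    have : ∑ v : ZMod 31, (if b i = v then (1:ℂ) else 0) * z v
        = ∑ v : ZMod 31, (if b i = v then z v else 0) := by
      refine Finset.sum_congr rfl fun v _ => ?_
      split <;> simp
    rw [this, Finset.sum_ite_eq, if_pos (Finset.mem_univ _), hb i]
  -- the correlation numbers
  set Cc : ZMod 31 → ℤ := fun s => ∑ w : ZMod 31, m (w + s) * m w with hCcdef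
  have hSSexp : S * (starRingEnd ℂ) S = ∑ s : ZMod 31, (Cc s : ℂ) * z s := by
    rw [hS, map_sum, Finset.sum_mul_sum]
    have hterm : ∀ v w : ZMod 31, ((m v : ℂ) * z v) * (starRingEnd ℂ) ((m w : ℂ) * z w)
        = ((m v * m w : ℤ) : ℂ) * z (v - w) := by
      intro v w
      rw [map_mul, zconj, map_intCast]
      have : z (v - w) = z v * z (-w) := by rw [sub_eq_add_neg, zmul]
      rw [this]
      push_cast
      ring
    simp_rw [hterm]
    rw [Finset.sum_comm]
    have hre : ∀ w : ZMod 31, ∑ v : ZMod 31, ((m v * m w : ℤ) : ℂ) * z (v - w)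
        = ∑ s : ZMod 31, ((m (w + s) * m w : ℤ) : ℂ) * z s := by
      intro w
      refine (Fintype.sum_equiv (Equiv.addLeft w)
        (fun s => ((m (w + s) * m w : ℤ) : ℂ) * z s)
        (fun v => ((m v * m w : ℤ) : ℂ) * z (v - w)) (fun s => ?_)).symm
      show ((m (w + s) * m w : ℤ) : ℂ) * z s = ((m (w + s) * m w : ℤ) : ℂ) * z (w + s - w)
      rw [add_sub_cancel_left]
    simp_rw [hre]
    rw [Finset.sum_comm]
    refine Finset.sum_congr rfl fun s _ => ?_
    rw [← Finset.sum_mul]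
    congr 1
    rw [hCcdef]
    push_cast
    rfl
  have hEq : ∑ s : ZMod 31, (Cc s : ℂ) * z s = 63 := by rw [← hSSexp, hSS]
  have hCsum : ∑ s : ZMod 31, Cc s = 1024 := by
    rw [hCcdef]
    rw [Finset.sum_comm]
    have : ∀ w : ZMod 31, ∑ s : ZMod 31, m (w + s) * m w = 32 * m w := by
      intro w
      rw [← Finset.sum_mul]
      congr 1
      rw [Fintype.sum_equiv (Equiv.addLeft w) (fun s => m (w + s)) m (fun s => rfl), hmsum]
    simp_rw [this]
    rw [← Finset.mul_sum, hmsum]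
    norm_num
  -- pass to sums over range 31 and extract coefficients by linear independence
  have hzk : ∀ k : ℕ, z ((k : ZMod 31)) = ζ ^ k := by
    intro k
    show ζ ^ ((k : ZMod 31)).val = ζ ^ k
    rw [ZMod.val_natCast, hmod]
  set dd : ℕ → ℤ := fun k => Cc ((k : ZMod 31)) with hdddef
  have hEqR : ∑ k ∈ Finset.range 31, ((dd k : ℤ) : ℂ) * ζ ^ k = 63 := by
    rw [← hEq, zmod31_sum (fun s => (Cc s : ℂ) * z s)]
    refine Finset.sum_congr rfl fun k _ => ?_
    rw [hzk]
  have hgeom : ∑ k ∈ Finset.range 31, ζ ^ k = 0 := hζ.geom_sum_eq_zero (by norm_num)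
  have h30 : ∑ k ∈ Finset.range 30, ((dd k - dd 30 : ℤ) : ℂ) * ζ ^ k = 63 := by
    have hfull : ∑ k ∈ Finset.range 31, ((dd k - dd 30 : ℤ) : ℂ) * ζ ^ k = 63 := by
      have : ∀ k, ((dd k - dd 30 : ℤ) : ℂ) * ζ ^ k
          = (dd k : ℂ) * ζ ^ k - (dd 30 : ℂ) * ζ ^ k := by
        intro k; push_cast; ring
      simp_rw [this]
      rw [Finset.sum_sub_distrib, hEqR, ← Finset.mul_sum, hgeom, mul_zero, sub_zero]
    rw [Finset.sum_range_succ] at hfull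
    simpa using hfull
  have hdeg : (minpoly ℚ ζ).natDegree = 30 := by
    rw [← Polynomial.cyclotomic_eq_minpoly_rat hζ (by norm_num),
      Polynomial.natDegree_cyclotomic, Nat.totient_prime (by norm_num)]
  have hli0 : LinearIndependent ℚ fun i : Fin 30 => ζ ^ (i : ℕ) := by
    have := linearIndependent_pow (K := ℚ) ζ
    rwa [hdeg] at this
  have hli := Fintype.linearIndependent_iff.1 hli0
  set g : Fin 30 → ℚ :=
    fun k => ((dd k - dd 30 : ℤ) : ℚ) - if (k : ℕ) = 0 then 63 else 0 with hgdef
  have hgzero : ∀ k : Fin 30, g k = 0 := by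
    refine hli g ?_
    have hsplit : ∀ k : Fin 30, g k • ζ ^ (k : ℕ)
        = ((dd k - dd 30 : ℤ) : ℂ) * ζ ^ (k : ℕ)
          - (if k = (0 : Fin 30) then (63 : ℂ) else 0) * ζ ^ (k : ℕ) := by
      intro k
      rw [Rat.smul_def]
      simp only [hgdef]
      by_cases hk : (k : ℕ) = 0
      · have hk' : k = (0 : Fin 30) := Fin.ext hk
        rw [if_pos hk, if_pos hk']
        push_cast
        ring
      · have hk' : k ≠ (0 : Fin 30) := fun hh => hk (by rw [hh]; rfl)
        rw [if_neg hk, if_neg hk']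
        push_cast
        ring
    simp_rw [hsplit]
    rw [Finset.sum_sub_distrib]
    have h1' : ∑ k : Fin 30, ((dd k - dd 30 : ℤ) : ℂ) * ζ ^ (k : ℕ) = 63 := by
      rw [Fin.sum_univ_eq_sum_range (fun k => ((dd k - dd 30 : ℤ) : ℂ) * ζ ^ k)]
      exact h30
    have h2' : ∑ k : Fin 30, (if k = (0 : Fin 30) then (63 : ℂ) else 0) * ζ ^ (k : ℕ)
        = 63 := by
      rw [Finset.sum_eq_single (0 : Fin 30)]
      · norm_num
      · intro k _ hk; rw [if_neg hk, zero_mul]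
      · intro h; exact absurd (Finset.mem_univ _) h
    rw [h1', h2', sub_self]
  have hall : ∀ k : ℕ, k < 31 → dd k = dd 30 + (if k = 0 then 63 else 0) := by
    intro k hk
    by_cases hk30 : k = 30
    · subst hk30; norm_num
    · have hk30' : k < 30 := by omega
      have := hgzero ⟨k, hk30'⟩
      rw [hgdef] at this
      simp only at this
      by_cases hk0 : k = 0
      · subst hk0
        rw [if_pos rfl] at this ⊢
        have : ((dd 0 - dd 30 : ℤ) : ℚ) = 63 := by linarith [this]
        have : (dd 0 - dd 30 : ℤ) = 63 := by exact_mod_cast this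
        omega
      · rw [if_neg hk0] at this ⊢
        have : ((dd k - dd 30 : ℤ) : ℚ) = 0 := by linarith [this]
        have : (dd k - dd 30 : ℤ) = 0 := by exact_mod_cast this
        omega
  have hdd30 : dd 30 = 31 := by
    have hR : ∑ k ∈ Finset.range 31, dd k = 1024 := by
      rw [← hCsum, zmod31_sum Cc]
    have : ∑ k ∈ Finset.range 31, dd k
        = ∑ k ∈ Finset.range 31, (dd 30 + (if k = 0 then 63 else 0)) := by
      refine Finset.sum_congr rfl fun k hk => hall k (Finset.mem_range.1 hk)
    rw [this, Finset.sum_add_distrib, Finset.sum_const, Finset.card_range,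
      Finset.sum_ite_eq' (Finset.range 31) 0 (fun _ => (63:ℤ))] at hR
    simp at hR
    omega
  -- mod 3
  have hCc1 : ∀ s : ZMod 31, ((Cc s : ℤ) : ZMod 3) = 1 := by
    intro s
    have hs : Cc s = dd s.val := by
      rw [hdddef]
      simp only
      rw [ZMod.natCast_rightInverse s]
    rw [hs, hall s.val s.val_lt, hdd30]
    by_cases h0 : s.val = 0
    · rw [if_pos h0]; decide
    · rw [if_neg h0]; decide
  set q : ZMod 31 → ZMod 3 := fun v => ((m v : ℤ) : ZMod 3) with hqdef
  have hqcorr : ∀ s : ZMod 31, ∑ w : ZMod 31, q (w + s) * q w = 1 := by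
    intro s
    have := hCc1 s
    rw [hCcdef] at this
    push_cast at this
    exact this
  have hqsum : ∑ v : ZMod 31, q v = 2 := by
    rw [hqdef]
    have : ((∑ v : ZMod 31, m v : ℤ) : ZMod 3) = ((32 : ℤ) : ZMod 3) := by rw [hmsum]
    push_cast at this
    rw [this]
    rfl
  set r : ZMod 31 → ZMod 3 := fun v => q v + 1 with hrdef
  have hrcorr : ∀ s : ZMod 31, ∑ w : ZMod 31, r (w + s) * r w = 0 := by
    intro s
    have hexp : ∀ w : ZMod 31, r (w + s) * r w = q (w + s) * q w + q (w + s) + q w + 1 := by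
      intro w; rw [hrdef]; ring
    simp_rw [hexp]
    rw [Finset.sum_add_distrib, Finset.sum_add_distrib, Finset.sum_add_distrib]
    have hshift' : ∑ w : ZMod 31, q (w + s) = 2 := by
      rw [Fintype.sum_equiv (Equiv.addRight s) (fun w => q (w + s)) q (fun w => rfl)]
      exact hqsum
    rw [hqcorr s, hshift', hqsum, Finset.sum_const]
    simp [ZMod.card]
    decide
  have hq2 : ∀ v, q v = 2 := by
    intro v
    have := corr_zero_imp_zero r hrcorr v
    rw [hrdef] at this
    simp only at this
    have : q v = -1 := by linear_combination this
    rw [this]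
    decide
  -- final counting contradiction
  have hge2 : ∀ v : ZMod 31, 2 ≤ m v := by
    intro v
    by_contra hlt
    push_neg at hlt
    have h0 := hm0 v
    interval_cases h : m v
    · have := hq2 v
      rw [hqdef] at this
      simp only at this
      rw [h] at this
      exact absurd this (by decide)
    · have := hq2 v
      rw [hqdef] at this
      simp only at this
      rw [h] at this
      exact absurd this (by decide)
  have : (62 : ℤ) ≤ 32 := by
    calc (62 : ℤ) = ∑ _v : ZMod 31, (2 : ℤ) := by
          rw [Finset.sum_const]
          simp [ZMod.card]
      _ ≤ ∑ v : ZMod 31, m v := Finset.sum_le_sum (fun v _ => hge2 v)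
      _ = 32 := hmsum
  omega
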